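/- For every ε > 0 and every k ≥ 2, there exist arbitrarily large digraphs D on n vertices (n divisible by k, n > some threshold depending on ε and k) such that the unique k-partition with minimum out-degree at least 1 within parts has total internal degree exactly n, while some other k-partition into parts of size n/k has total internal degree at least nk − k^3; in particular the ratio of the maximum utilitarian welfare to the utilitarian welfare of the maximum-egalitarian partition is unbounded as n → ∞. -/

import Mathlib

namespace Stmt8Aux

def stp {n : ℕ} (v : Fin n) (j : ℕ) : Fin n := ⟨(v.val + j) % n, Nat.mod_lt _ v.pos⟩

lemma stp_stp {n : ℕ} (v : Fin n) (a b : ℕ) : stp (stp v a) b = stp v (a + b) := by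
  apply Fin.ext
  show ((v.val + a) % n + b) % n = (v.val + (a + b)) % n
  rw [Nat.mod_add_mod, Nat.add_assoc]

lemma stp_zero {n : ℕ} (v : Fin n) : stp v 0 = v := by
  apply Fin.ext
  show (v.val + 0) % n = v.val
  rw [Nat.add_zero, Nat.mod_eq_of_lt v.isLt]

/-- cancellation: same shift, same result implies equal. -/
lemma stp_cancel {n : ℕ} (v w : Fin n) (j : ℕ) (h : stp v j = stp w j) : v = w := by
  have h1 : (v.val + j) % n = (w.val + j) % n := congrArg Fin.val h
  have h2 : v.val ≡ w.val [MOD n] := Nat.ModEq.add_right_cancel' j h1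
  exact Fin.ext (by
    have := h2
    unfold Nat.ModEq at this
    rwa [Nat.mod_eq_of_lt v.isLt, Nat.mod_eq_of_lt w.isLt] at this)

/-- The key lemma: for a surjective partition where every vertex has an internal
out-neighbor within distance `k`, every step of size `< k` leaves the part and
step `k` stays. -/
lemma key {n k : ℕ} (hk : 2 ≤ k) (hkltn : k < n)
    (P : Fin n → Fin k) (hsurj : Function.Surjective P)
    (hP : ∀ v : Fin n, ∃ j ∈ Finset.Icc 1 k, P (stp v j) = P v) :
    ∀ (v : Fin n) (j : ℕ), 0 < j → j ≤ k → (P (stp v j) = P v ↔ j = k) := by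
  have hpos : 0 < n := by omega
  have hex : ∀ v : Fin n, ∃ j, 0 < j ∧ P (stp v j) = P v := by
    intro v
    obtain ⟨j, hj, h⟩ := hP v
    exact ⟨j, by have := Finset.mem_Icc.mp hj; omega, h⟩
  set g : Fin n → ℕ := fun v => Nat.find (hex v) with hg
  have hg1 : ∀ v, 0 < g v := fun v => (Nat.find_spec (hex v)).1
  have hgs : ∀ v, P (stp v (g v)) = P v := fun v => (Nat.find_spec (hex v)).2
  have hgk : ∀ v, g v ≤ k := by
    intro v
    obtain ⟨j, hj, h⟩ := hP v
    have hj' := Finset.mem_Icc.mp hj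
    exact le_trans (Nat.find_le ⟨by omega, h⟩) hj'.2
  have hmin : ∀ (v : Fin n) (j : ℕ), 0 < j → j < g v → P (stp v j) ≠ P v := by
    intro v j h0 hlt hEq
    exact Nat.find_min (hex v) hlt ⟨h0, hEq⟩
  -- injectivity helper
  have hltcase : ∀ (v w : Fin n) (a b : ℕ), a ∈ Finset.Icc 1 (g v) → b ∈ Finset.Icc 1 (g w) →
      stp v a = stp w b → P v = P w → b < a → False := by
    intro v w a b ha hb hst hPvw hba
    have ha' := Finset.mem_Icc.mp ha
    have hb' := Finset.mem_Icc.mp hb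
    have h1 : (v.val + a) % n = (w.val + b) % n := congrArg Fin.val hst
    have h2 : (v.val + (a - b)) + b = v.val + a := by omega
    have h3 : (v.val + (a - b)) ≡ w.val [MOD n] := by
      apply Nat.ModEq.add_right_cancel' b
      show (v.val + (a - b) + b) % n = (w.val + b) % n
      rw [h2]; exact h1
    have h4 : stp v (a - b) = w := by
      apply Fin.ext
      show (v.val + (a - b)) % n = w.val
      have := h3
      unfold Nat.ModEq at this
      rwa [Nat.mod_eq_of_lt w.isLt] at this
    have h5 : P (stp v (a - b)) = P v := by rw [h4, hPvw]
    exact hmin v (a - b) (by omega) (by omega) h5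
  -- the counting bijection
  have hcard : (Finset.univ.sigma (fun v : Fin n => Finset.Icc 1 (g v))).card
      = (Finset.univ : Finset (Fin n × Fin k)).card := by
    apply Finset.card_bij (fun x _ => (stp x.1 x.2, P x.1))
    · intro a ha; exact Finset.mem_univ _
    · -- injective
      intro x hx y hy hxy
      have hmem1 : x.2 ∈ Finset.Icc 1 (g x.1) := (Finset.mem_sigma.mp hx).2
      have hmem2 : y.2 ∈ Finset.Icc 1 (g y.1) := (Finset.mem_sigma.mp hy).2
      have h1 : stp x.1 x.2 = stp y.1 y.2 := congrArg Prod.fst hxy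
      have h2 : P x.1 = P y.1 := congrArg Prod.snd hxy
      rcases lt_trichotomy x.2 y.2 with h | h | h
      · exact absurd h (by intro hc; exact hltcase y.1 x.1 y.2 x.2 hmem2 hmem1 h1.symm h2.symm hc)
      · obtain ⟨v1, a⟩ := x
        obtain ⟨v2, b⟩ := y
        simp only at h h1
        have hv : v1 = v2 := stp_cancel v1 v2 a (by rw [h1, h])
        subst hv; subst h; rfl
      · exact absurd h (by intro hc; exact hltcase x.1 y.1 x.2 y.2 hmem1 hmem2 h1 h2 hc)
    · -- surjective
      intro b _
      obtain ⟨u, c⟩ := b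
      obtain ⟨w, hw⟩ := hsurj c
      set p : ℕ → Prop := fun s => P (stp u s) = c with hp
      have hdp : DecidablePred p := fun s => inferInstanceAs (Decidable (_ = _))
      have hex0 : ∃ s ≤ n - 1, p s := by
        refine ⟨(w.val + n - u.val) % n, by have := Nat.mod_lt (w.val + n - u.val) hpos; omega, ?_⟩
        show P (stp u ((w.val + n - u.val) % n)) = c
        have hst : stp u ((w.val + n - u.val) % n) = w := by
          apply Fin.ext
          show (u.val + (w.val + n - u.val) % n) % n = w.val
          have h1 : (u.val + (w.val + n - u.val) % n) % n = (u.val + (w.val + n - u.val)) % n := by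
            rw [Nat.add_mod u.val ((w.val + n - u.val) % n) n,
              Nat.mod_mod_of_dvd _ (dvd_refl n), ← Nat.add_mod]
          rw [h1]
          have h2 : u.val + (w.val + n - u.val) = w.val + n := by
            have := u.isLt; omega
          rw [h2, Nat.add_mod_right, Nat.mod_eq_of_lt w.isLt]
        rw [hst, hw]
      obtain ⟨s0, hs0le, hs0⟩ := hex0
      set s := Nat.findGreatest p (n - 1) with hsdef
      have hs : p s := Nat.findGreatest_spec hs0le hs0
      have hsle : s ≤ n - 1 := Nat.findGreatest_le (n - 1)
      set v := stp u s with hv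
      set j := n - s with hj
      have hj1 : 1 ≤ j := by omega
      have hstpvj : stp v j = u := by
        rw [hv, stp_stp]
        apply Fin.ext
        show (u.val + (s + (n - s))) % n = u.val
        have : s + (n - s) = n := by omega
        rw [this, Nat.add_mod_right, Nat.mod_eq_of_lt u.isLt]
      have hjg : j ≤ g v := by
        by_contra hc
        push_neg at hc
        have hs' : p (s + g v) := by
          show P (stp u (s + g v)) = c
          rw [← stp_stp]
          show P (stp v (g v)) = c
          rw [hgs v]; exact hs
        have : s + g v ≤ n - 1 := by have := hg1 v; omega
        exact Nat.findGreatest_is_greatest (by have := hg1 v; omega) this hs'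
      refine ⟨⟨v, j⟩, Finset.mem_sigma.mpr ⟨Finset.mem_univ _, Finset.mem_Icc.mpr ⟨hj1, hjg⟩⟩, ?_⟩
      show (stp v j, P v) = (u, c)
      rw [hstpvj, hs]
  -- sum of g = n * k
  have hsum : ∑ v : Fin n, g v = n * k := by
    have h1 := hcard
    rw [Finset.card_sigma, Finset.card_univ, Fintype.card_prod, Fintype.card_fin,
      Fintype.card_fin] at h1
    calc ∑ v : Fin n, g v = ∑ v : Fin n, (Finset.Icc 1 (g v)).card := by
          apply Finset.sum_congr rfl
          intro v _
          rw [Nat.card_Icc]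
          omega
    _ = n * k := h1
  -- conclude g v = k everywhere
  have hgeq : ∀ v : Fin n, g v = k := by
    have h2 : ∑ v : Fin n, g v = ∑ _v : Fin n, k := by
      rw [hsum, Finset.sum_const, Finset.card_univ, Fintype.card_fin, smul_eq_mul]
    have := (Finset.sum_eq_sum_iff_of_le (fun i _ => hgk i)).mp h2
    intro v; exact this v (Finset.mem_univ v)
  intro v j h0 hle
  constructor
  · intro hEq
    by_contra hne
    exact hmin v j h0 (by rw [hgeq v]; omega) hEq
  · intro hEq
    subst hEq
    have := hgs v
    rwa [hgeq v] at this

end Stmt8Aux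

namespace Stmt8Aux

lemma resid {n k : ℕ} (hk : 2 ≤ k) (hkn : k ∣ n) (hkltn : k < n)
    (P : Fin n → Fin k) (hsurj : Function.Surjective P)
    (hP : ∀ v : Fin n, ∃ j ∈ Finset.Icc 1 k, P (stp v j) = P v) :
    (∀ u v : Fin n, P u = P v ↔ u.val % k = v.val % k) ∧
      (∑ v : Fin n, ((Finset.Icc 1 k).filter (fun j => P (stp v j) = P v)).card) = n := by
  have hkey := key hk hkltn P hsurj hP
  have hk0 : 0 < k := by omega
  have hstep : ∀ v : Fin n, P (stp v k) = P v := fun v => (hkey v k hk0 le_rfl).mpr rfl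
  have hne : ∀ (v : Fin n) (j : ℕ), 0 < j → j < k → P (stp v j) ≠ P v := by
    intro v j h0 hlt h
    have := (hkey v j h0 (le_of_lt hlt)).mp h
    omega
  have hmul : ∀ (v : Fin n) (t : ℕ), P (stp v (t * k)) = P v := by
    intro v t
    induction t with
    | zero => rw [Nat.zero_mul, stp_zero]
    | succ t ih =>
      have : stp v ((t + 1) * k) = stp (stp v (t * k)) k := by
        rw [stp_stp]; congr 1; ring
      rw [this, hstep, ih]
  have hres : ∀ u : Fin n, P u = P ⟨u.val % k, lt_trans (Nat.mod_lt _ hk0) hkltn⟩ := by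
    intro u
    have h1 : stp (⟨u.val % k, lt_trans (Nat.mod_lt _ hk0) hkltn⟩ : Fin n) (u.val / k * k) = u := by
      apply Fin.ext
      show (u.val % k + u.val / k * k) % n = u.val
      rw [Nat.mod_add_div', Nat.mod_eq_of_lt u.isLt]
    conv_lhs => rw [← h1]
    exact hmul _ _
  have hdist : ∀ r s : ℕ, ∀ (hrs : r < s) (hsk : s < k),
      P (⟨s, lt_trans hsk hkltn⟩ : Fin n) ≠ P ⟨r, lt_trans (lt_trans hrs hsk) hkltn⟩ := by
    intro r s hrs hsk h
    have h1 : stp (⟨r, lt_trans (lt_trans hrs hsk) hkltn⟩ : Fin n) (s - r)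
        = ⟨s, lt_trans hsk hkltn⟩ := by
      apply Fin.ext
      show (r + (s - r)) % n = s
      have : r + (s - r) = s := by omega
      rw [this, Nat.mod_eq_of_lt (lt_trans hsk hkltn)]
    have := hne ⟨r, lt_trans (lt_trans hrs hsk) hkltn⟩ (s - r) (by omega) (by omega)
    rw [h1] at this
    exact this h
  constructor
  · intro u v
    constructor
    · intro h
      by_contra hc
      have hu := hres u
      have hv := hres v
      rw [hu, hv] at h
      rcases Nat.lt_or_ge (u.val % k) (v.val % k) with hlt | hge
      · exact hdist (u.val % k) (v.val % k) hlt (Nat.mod_lt _ hk0) h.symm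
      · have hlt : v.val % k < u.val % k := by omega
        exact hdist (v.val % k) (u.val % k) hlt (Nat.mod_lt _ hk0) h
    · intro h
      rw [hres u, hres v]
      congr 1
      exact Fin.ext h
  · have hfilter : ∀ v : Fin n,
        (Finset.Icc 1 k).filter (fun j => P (stp v j) = P v) = {k} := by
      intro v
      ext j
      simp only [Finset.mem_filter, Finset.mem_Icc, Finset.mem_singleton]
      constructor
      · rintro ⟨⟨h1, h2⟩, h3⟩
        exact (hkey v j (by omega) h2).mp h3
      · rintro rfl
        exact ⟨⟨by omega, le_rfl⟩, hstep v⟩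
    calc ∑ v : Fin n, ((Finset.Icc 1 k).filter (fun j => P (stp v j) = P v)).card
        = ∑ _v : Fin n, 1 := by
          apply Finset.sum_congr rfl
          intro v _
          rw [hfilter v, Finset.card_singleton]
      _ = n := by rw [Finset.sum_const, Finset.card_univ, Fintype.card_fin, smul_eq_mul, mul_one]

lemma residue_part {n k : ℕ} (hk : 2 ≤ k) (hkn : k ∣ n) (hkltn : k < n) :
    (∀ v : Fin n, ∃ j ∈ Finset.Icc 1 k, ((v.val + j) % n) % k = v.val % k) ∧
      (∑ v : Fin n, ((Finset.Icc 1 k).filter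
          (fun j => ((v.val + j) % n) % k = v.val % k)).card) = n := by
  have hk0 : 0 < k := by omega
  have hiff : ∀ (v : Fin n) (j : ℕ), 1 ≤ j → j ≤ k →
      (((v.val + j) % n) % k = v.val % k ↔ j = k) := by
    intro v j h1 h2
    rw [Nat.mod_mod_of_dvd _ hkn]
    constructor
    · intro h
      have hmod : j ≡ 0 [MOD k] := by
        apply Nat.ModEq.add_left_cancel' v.val
        show (v.val + j) % k = (v.val + 0) % k
        rw [h, Nat.add_zero]
      have : j % k = 0 := by simpa [Nat.ModEq] using hmod
      have := Nat.le_of_dvd (by omega) (Nat.dvd_of_mod_eq_zero this)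
      omega
    · rintro rfl
      exact Nat.add_mod_right _ _
  constructor
  · intro v
    exact ⟨k, Finset.mem_Icc.mpr ⟨hk0, le_rfl⟩, (hiff v k hk0 le_rfl).mpr rfl⟩
  · have hfilter : ∀ v : Fin n,
        (Finset.Icc 1 k).filter (fun j => ((v.val + j) % n) % k = v.val % k) = {k} := by
      intro v
      ext j
      simp only [Finset.mem_filter, Finset.mem_Icc, Finset.mem_singleton]
      constructor
      · rintro ⟨⟨h1, h2⟩, h3⟩
        exact (hiff v j h1 h2).mp h3
      · intro hj
        subst hj
        exact ⟨⟨hk0, le_rfl⟩, (hiff v j hk0 le_rfl).mpr rfl⟩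
    calc ∑ v : Fin n, ((Finset.Icc 1 k).filter
          (fun j => ((v.val + j) % n) % k = v.val % k)).card
        = ∑ _v : Fin n, 1 := by
          apply Finset.sum_congr rfl
          intro v _
          rw [hfilter v, Finset.card_singleton]
      _ = n := by rw [Finset.sum_const, Finset.card_univ, Fintype.card_fin, smul_eq_mul, mul_one]

end Stmt8Aux

namespace Stmt8Aux

lemma qpart {n k m : ℕ} (hk : 2 ≤ k) (hm : k ≤ m) (hn : n = k * m) :
    ∃ Q : Fin n → Fin k,
      (∀ c : Fin k, (Finset.univ.filter (fun v => Q v = c)).card = n / k) ∧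
      n * k - k ^ 3 ≤ ∑ v : Fin n, ((Finset.Icc 1 k).filter
          (fun j => Q (stp v j) = Q v)).card := by
  have hk0 : 0 < k := by omega
  have hm0 : 0 < m := by omega
  have hpos : 0 < n := by rw [hn]; positivity
  refine ⟨fun v => ⟨v.val / m, by
    rw [Nat.div_lt_iff_lt_mul hm0, ← hn]; exact v.isLt⟩, ?_, ?_⟩
  · -- block sizes
    intro c
    have hnk : n / k = m := by rw [hn, Nat.mul_div_cancel_left _ hk0]
    rw [hnk]
    have := Finset.card_nbij' (s := Finset.univ.filter
        (fun v : Fin n => (⟨v.val / m, by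
          rw [Nat.div_lt_iff_lt_mul hm0, ← hn]; exact v.isLt⟩ : Fin k) = c))
        (t := (Finset.univ : Finset (Fin m)))
        (fun v => ⟨v.val % m, Nat.mod_lt _ hm0⟩)
        (fun r => ⟨c.val * m + r.val, by
          calc c.val * m + r.val < c.val * m + m := by omega
            _ = (c.val + 1) * m := by ring
            _ ≤ k * m := Nat.mul_le_mul_right m (by omega)
            _ = n := hn.symm⟩)
        (fun a _ => Finset.mem_univ _)
        ?_ ?_ ?_
    · rw [this, Finset.card_univ, Fintype.card_fin]
    · intro r _
      simp only [Finset.mem_coe, Finset.mem_filter, Finset.mem_univ, true_and]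
      apply Fin.ext
      show (c.val * m + r.val) / m = c.val
      rw [mul_comm, Nat.mul_add_div hm0, Nat.div_eq_of_lt r.isLt, Nat.add_zero]
    · intro v hv
      simp only [Finset.mem_coe, Finset.mem_filter, Finset.mem_univ, true_and] at hv
      have hc : v.val / m = c.val := congrArg Fin.val hv
      apply Fin.ext
      show c.val * m + v.val % m = v.val
      calc c.val * m + v.val % m = v.val / m * m + v.val % m := by rw [hc]
        _ = v.val := Nat.div_add_mod' _ _
    · intro r _
      apply Fin.ext
      show (c.val * m + r.val) % m = r.val
      rw [mul_comm, Nat.mul_add_mod, Nat.mod_eq_of_lt r.isLt]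
  · -- sum lower bound
    set Q : Fin n → Fin k := fun v => ⟨v.val / m, by
      rw [Nat.div_lt_iff_lt_mul hm0, ← hn]; exact v.isLt⟩ with hQ
    set good : Finset (Fin n) := Finset.univ.filter (fun v => v.val % m + k < m) with hgood
    -- on good vertices every j in [1,k] stays in the block
    have hfull : ∀ v ∈ good, (Finset.Icc 1 k).filter (fun j => Q (stp v j) = Q v)
        = Finset.Icc 1 k := by
      intro v hv
      rw [hgood, Finset.mem_filter] at hv
      have hvm : v.val % m + k < m := hv.2
      apply Finset.filter_true_of_mem
      intro j hj
      have hj' := Finset.mem_Icc.mp hj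
      have hdm : v.val = m * (v.val / m) + v.val % m := (Nat.div_add_mod _ _).symm
      have hdiv : v.val / m < k := by
        rw [Nat.div_lt_iff_lt_mul hm0, ← hn]; exact v.isLt
      have hlt : v.val + j < n := by
        calc v.val + j = m * (v.val / m) + (v.val % m + j) := by omega
          _ < m * (v.val / m) + m := by omega
          _ = m * (v.val / m + 1) := by ring
          _ ≤ m * k := Nat.mul_le_mul_left m (by omega)
          _ = n := by rw [hn, mul_comm]
      have hval : (stp v j).val = v.val + j := by
        show (v.val + j) % n = v.val + j
        exact Nat.mod_eq_of_lt hlt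
      have hkey2 : (v.val + j) / m = v.val / m := by
        have h1 : v.val + j = m * (v.val / m) + (v.val % m + j) := by omega
        rw [h1, Nat.mul_add_div hm0,
          Nat.div_eq_of_lt (show v.val % m + j < m by omega), Nat.add_zero]
      apply Fin.ext
      show (stp v j).val / m = v.val / m
      rw [hval, hkey2]
    -- card of good = k * (m - k)
    have hgoodcard : good.card = k * (m - k) := by
      have := Finset.card_bij (s := good) (t := (Finset.univ : Finset (Fin k × Fin (m - k))))
        (fun v hv => (⟨v.val / m, by
            rw [Nat.div_lt_iff_lt_mul hm0, ← hn]; exact v.isLt⟩,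
          ⟨v.val % m, by
            rw [hgood, Finset.mem_filter] at hv
            omega⟩))
        (fun a _ => Finset.mem_univ _) ?_ ?_
      · rw [this, Finset.card_univ, Fintype.card_prod, Fintype.card_fin, Fintype.card_fin]
      · -- injective
        intro v hv w hw hEq
        have h1 : v.val / m = w.val / m := congrArg (fun x : Fin k × Fin (m - k) => (x.1 : ℕ)) hEq
        have h2 : v.val % m = w.val % m := congrArg (fun x : Fin k × Fin (m - k) => (x.2 : ℕ)) hEq
        have hdmv := Nat.div_add_mod v.val m
        have hdmw := Nat.div_add_mod w.val m
        rw [h1] at hdmv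
        apply Fin.ext
        omega
      · -- surjective
        intro x _
        have h2 := x.2.isLt
        have h2' : x.2.val < m := by omega
        have hlt : x.1.val * m + x.2.val < n := by
          calc x.1.val * m + x.2.val < x.1.val * m + m := by omega
            _ = (x.1.val + 1) * m := by ring
            _ ≤ k * m := Nat.mul_le_mul_right m (by omega)
            _ = n := hn.symm
        have hmod : (x.1.val * m + x.2.val) % m = x.2.val := by
          rw [mul_comm, Nat.mul_add_mod, Nat.mod_eq_of_lt h2']
        have hdiv : (x.1.val * m + x.2.val) / m = x.1.val := by
          rw [mul_comm, Nat.mul_add_div hm0, Nat.div_eq_of_lt h2', Nat.add_zero]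
        refine ⟨⟨x.1.val * m + x.2.val, hlt⟩, ?_, ?_⟩
        · rw [hgood, Finset.mem_filter]
          refine ⟨Finset.mem_univ _, ?_⟩
          show (x.1.val * m + x.2.val) % m + k < m
          rw [hmod]
          omega
        · apply Prod.ext
          · apply Fin.ext
            exact hdiv
          · apply Fin.ext
            exact hmod
    have hsumlb : good.card * k ≤ ∑ v : Fin n, ((Finset.Icc 1 k).filter
        (fun j => Q (stp v j) = Q v)).card := by
      calc good.card * k = ∑ _v ∈ good, k := by rw [Finset.sum_const, smul_eq_mul]
        _ = ∑ v ∈ good, ((Finset.Icc 1 k).filter (fun j => Q (stp v j) = Q v)).card := by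
            apply Finset.sum_congr rfl
            intro v hv
            rw [hfull v hv, Nat.card_Icc]
            omega
        _ ≤ ∑ v : Fin n, ((Finset.Icc 1 k).filter (fun j => Q (stp v j) = Q v)).card :=
            Finset.sum_le_sum_of_subset (Finset.filter_subset _ _)
    have hfinal : n * k - k ^ 3 ≤ good.card * k := by
      rw [hgoodcard]
      obtain ⟨d, hd⟩ : ∃ d, m = d + k := ⟨m - k, by omega⟩
      subst hd
      have hdk : d + k - k = d := by omega
      have hnn : n * k = k * d * k + k ^ 3 := by rw [hn]; ring
      rw [hdk, hnn]
      omega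
    exact le_trans hfinal hsumlb

end Stmt8Aux

/-- For every `ε > 0` and every `k ≥ 2` there exist arbitrarily large circulant digraphs
`Circ(n; {1,…,k})` on `n` vertices (`k ∣ n`) such that: every surjective `k`-partition in
which each vertex has out-degree at least 1 within its own part is exactly the partition
into residue classes mod `k` and has total internal degree exactly `n` (and the residue
partition indeed has this property); some other `k`-partition into parts of size `n/k`
has total internal degree at least `n*k - k^3`; and `n*k - k^3 ≥ k*(1+ε)`, so the ratio
of the maximum utilitarian welfare to the utilitarian welfare of the maximum-egalitarian
partition is unbounded. -/
theorem stmt_8 (k : ℕ) (hk : 2 ≤ k) (ε : ℝ) (hε : 0 < ε) (N : ℕ) :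
    ∃ n : ℕ, N ≤ n ∧ 0 < n ∧ k ∣ n ∧
      -- the residue-classes-mod-k partition has every vertex with an internal
      -- out-neighbor, and total internal degree exactly n
      ((∀ v : Fin n, ∃ j ∈ Finset.Icc 1 k,
          ((v.val + j) % n) % k = v.val % k) ∧
        (∑ v : Fin n, ((Finset.Icc 1 k).filter
            (fun j => ((v.val + j) % n) % k = v.val % k)).card) = n) ∧
      -- uniqueness: any surjective k-partition with minimum internal out-degree ≥ 1
      -- is the residue partition, and its total internal degree is exactly n
      (∀ P : Fin n → Fin k, Function.Surjective P →
        (∀ v : Fin n, ∃ j ∈ Finset.Icc 1 k,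
            P ⟨(v.val + j) % n, Nat.mod_lt _ v.pos⟩ = P v) →
        ((∀ u v : Fin n, P u = P v ↔ u.val % k = v.val % k) ∧
          (∑ v : Fin n, ((Finset.Icc 1 k).filter
              (fun j => P ⟨(v.val + j) % n, Nat.mod_lt _ v.pos⟩ = P v)).card)
            = n)) ∧
      -- some k-partition into parts of size n/k has total internal degree ≥ n*k - k^3
      (∃ Q : Fin n → Fin k,
        (∀ c : Fin k, (Finset.univ.filter (fun v => Q v = c)).card = n / k) ∧
        n * k - k ^ 3 ≤ ∑ v : Fin n, ((Finset.Icc 1 k).filter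
            (fun j => Q ⟨(v.val + j) % n, Nat.mod_lt _ v.pos⟩ = Q v)).card) ∧
      -- hence the utilitarian welfare of the egalitarian-optimal partition cannot be
      -- within a factor k*(1+ε) of the maximum utilitarian welfare
      (k : ℝ) * (1 + ε) ≤ (n : ℝ) * k - (k : ℝ) ^ 3 := by
  classical
  set m : ℕ := max N (k * k + ⌈ε⌉₊ + 2) with hmdef
  have hmN : N ≤ m := le_max_left _ _
  have hm2 : k * k + ⌈ε⌉₊ + 2 ≤ m := le_max_right _ _
  have hk0 : 0 < k := by omega
  have hkm : k ≤ m := by nlinarith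
  have hm0 : 0 < m := by omega
  refine ⟨k * m, ?_, ?_, ⟨m, rfl⟩, ?_, ?_, ?_, ?_⟩
  · calc N ≤ m := hmN
      _ ≤ k * m := Nat.le_mul_of_pos_left m hk0
  · positivity
  · -- residue partition
    exact Stmt8Aux.residue_part hk ⟨m, rfl⟩
      (show k < k * m by nlinarith)
  · -- uniqueness
    intro P hsurj hP
    exact Stmt8Aux.resid hk ⟨m, rfl⟩
      (show k < k * m by nlinarith) P hsurj hP
  · -- Q partition
    exact Stmt8Aux.qpart hk hkm rfl
  · -- real inequality
    have hceil : ε ≤ (⌈ε⌉₊ : ℝ) := Nat.le_ceil ε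
    have hK : (2 : ℝ) ≤ (k : ℝ) := by exact_mod_cast hk
    have hM : (k : ℝ) * k + ε + 2 ≤ (m : ℝ) := by
      have h1 : ((k * k + ⌈ε⌉₊ + 2 : ℕ) : ℝ) ≤ (m : ℝ) := by exact_mod_cast hm2
      push_cast at h1
      linarith
    have hcast : ((k * m : ℕ) : ℝ) = (k : ℝ) * (m : ℝ) := by push_cast; ring
    rw [hcast]
    nlinarith [sq_nonneg ((k : ℝ) - 1), sq_nonneg (k : ℝ), mul_pos (lt_of_lt_of_le two_pos hK) hε,
      mul_le_mul_of_nonneg_left hM (mul_nonneg (by linarith : (0:ℝ) ≤ (k:ℝ)) (by linarith : (0:ℝ) ≤ (k:ℝ)))]
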